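/- Every endpoint rule f^{p,q} satisfies out-between-ness: for every profile S, agent i, and alternative interval S'_i, f^{p,q}(S) lies between S_i and f^{p,q}(S'_i, S_{-i}) in the interval betweenness relation. Consequently, endpoint rules are strategyproof with respect to generalized single-peaked preferences. -/

import Mathlib

/-- A bounded open nonempty interval of ℝ, given by endpoints `lo < hi`. -/
structure OInt where
  lo : ℝ
  hi : ℝ
  lt : lo < hi

/-- The set of points of the interval. -/
def OInt.toSet (I : OInt) : Set ℝ := Set.Ioo I.lo I.hi

/-- Number of agents whose interval contains a point ≤ x, i.e. |{i : (-∞,x] ∩ S_i ≠ ∅}|. -/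
noncomputable def lowCount {n : ℕ} (S : Fin n → OInt) (x : ℝ) : ℕ :=
  (Finset.univ.filter fun i => (S i).lo < x).card

/-- Number of agents whose interval contains a point ≥ x, i.e. |{i : [x,∞) ∩ S_i ≠ ∅}|. -/
noncomputable def highCount {n : ℕ} (S : Fin n → OInt) (x : ℝ) : ℕ :=
  (Finset.univ.filter fun i => x < (S i).hi).card

/-- The endpoint rule f^{p,q}, as a set:
    {x : |{i : (-∞,x] ∩ S_i ≠ ∅}| ≥ p and |{i : [x,∞) ∩ S_i ≠ ∅}| ≥ q}. -/
def eprSet {n : ℕ} (p q : ℕ) (S : Fin n → OInt) : Set ℝ :=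
  {x | p ≤ lowCount S x ∧ q ≤ highCount S x}

/-- The k-th smallest (1-indexed) value of a finite family of reals. -/
noncomputable def kthSmall {n : ℕ} (a : Fin n → ℝ) (k : ℕ) : ℝ :=
  (List.insertionSort (· ≤ ·) (List.ofFn a)).getD (k - 1) 0

/-- The k-th largest (1-indexed) value of a finite family of reals. -/
noncomputable def kthLarge {n : ℕ} (a : Fin n → ℝ) (k : ℕ) : ℝ :=
  (List.insertionSort (· ≤ ·) (List.ofFn a)).getD (n - k) 0

/-- z is weakly between x and y. -/
def Btw3 (x z y : ℝ) : Prop := (x ≤ z ∧ z ≤ y) ∨ (y ≤ z ∧ z ≤ x)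

/-- Interval betweenness: `IB R S T` means S ∈ B(R,T), i.e. inf S is weakly between
inf R and inf T, and sup S is weakly between sup R and sup T. -/
def IB (R S T : OInt) : Prop := Btw3 R.lo S.lo T.lo ∧ Btw3 R.hi S.hi T.hi

/-- A generalized single-peaked preference with peak `peak`: the peak is the unique
maximal element, and an interval between the peak and a third interval is preferred
to the third interval. -/
def SinglePeaked (pref : OInt → OInt → Prop) (peak : OInt) : Prop :=
  (∀ T, pref T peak → T = peak) ∧
  (∀ R T, IB peak R T → pref peak R ∧ pref R T)

/-- Strategyproofness: reporting one's peak is always weakly preferred. -/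
def Strategyproof {n : ℕ} (f : (Fin n → OInt) → OInt) : Prop :=
  ∀ (S : Fin n → OInt) (i : Fin n) (pref : OInt → OInt → Prop) (peak : OInt),
    SinglePeaked pref peak → pref (f (Function.update S i peak)) (f S)

/-- Out-between-ness: f(S) lies between S_i and f(S'_i, S_{-i}). -/
def OutBetween {n : ℕ} (f : (Fin n → OInt) → OInt) : Prop :=
  ∀ (S : Fin n → OInt) (i : Fin n) (S' : OInt), IB (S i) (f S) (f (Function.update S i S'))

/-- Lower endpoint of the endpoint rule: the p-th smallest lower endpoint. -/
noncomputable def eprLo {n : ℕ} (p : ℕ) (S : Fin n → OInt) : ℝ :=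
  kthSmall (fun i => (S i).lo) p

/-- Upper endpoint of the endpoint rule: the q-th largest upper endpoint. -/
noncomputable def eprHi {n : ℕ} (q : ℕ) (S : Fin n → OInt) : ℝ :=
  kthLarge (fun i => (S i).hi) q

/-- The endpoint rule f^{p,q} as an interval-valued rule (well-defined when
1 ≤ p, 1 ≤ q, and p + q ≤ n + 1, in which case the junk value is never used). -/
noncomputable def eprI {n : ℕ} (p q : ℕ) (S : Fin n → OInt) : OInt :=
  if h : eprLo p S < eprHi q S then ⟨eprLo p S, eprHi q S, h⟩ else ⟨0, 1, one_pos⟩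


section Aux

lemma myCountP_eq_sum_ind {α : Type*} (l : List α) (p : α → Bool) :
    l.countP p = (l.map fun x => if p x then 1 else 0).sum := by
  induction l with
  | nil => simp
  | cons a l ih => by_cases h : p a <;> simp [List.countP_cons, h, ih, Nat.add_comm]

lemma myCard_filter_eq_countP {n : ℕ} (v : Fin n → ℝ) (P : ℝ → Prop) [DecidablePred P] :
    (Finset.univ.filter fun i => P (v i)).card = (List.ofFn v).countP (fun x => decide (P x)) := by
  rw [Finset.card_filter, myCountP_eq_sum_ind, List.map_ofFn,
    ← List.sum_ofFn (f := fun i => if P (v i) then 1 else 0)]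
  have : ((fun x => if decide (P x) = true then (1:ℕ) else 0) ∘ v)
      = fun i => if P (v i) then 1 else 0 := by
    funext i; simp [Function.comp]
  rw [this]

variable {n : ℕ}

/-- helper: the sorted list of values. -/
noncomputable def srt (v : Fin n → ℝ) : List ℝ := List.insertionSort (· ≤ ·) (List.ofFn v)

lemma srt_sorted (v : Fin n → ℝ) : (srt v).Pairwise (· ≤ ·) :=
  List.pairwise_insertionSort _ _

lemma srt_length (v : Fin n → ℝ) : (srt v).length = n := by
  simp [srt, List.length_insertionSort]

lemma srt_perm (v : Fin n → ℝ) : (srt v).Perm (List.ofFn v) := List.perm_insertionSort _ _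

lemma kthSmall_eq (v : Fin n → ℝ) (k : ℕ) : kthSmall v k = (srt v).getD (k-1) 0 := rfl

lemma myCard_filter_eq_countP_srt (v : Fin n → ℝ) (P : ℝ → Prop) [DecidablePred P] :
    (Finset.univ.filter fun i => P (v i)).card = (srt v).countP (fun x => decide (P x)) := by
  rw [myCard_filter_eq_countP, (srt_perm v).countP_eq]

lemma sorted_countP_lt (l : List ℝ) (hs : l.Pairwise (· ≤ ·)) (j : ℕ) (hj : j < l.length) :
    l.countP (fun x => decide (x < l.getD j 0)) ≤ j := by
  set m := l.getD j 0 with hmdef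
  have hm : m = l[j] := List.getD_eq_getElem l 0 hj
  have h1 : l.countP (fun x => decide (x < m))
      = (l.take j).countP (fun x => decide (x < m)) + (l.drop j).countP (fun x => decide (x < m)) := by
    conv_lhs => rw [← List.take_append_drop j l]
    exact List.countP_append
  have h2 : (l.drop j).countP (fun x => decide (x < m)) = 0 := by
    rw [List.countP_eq_zero]
    intro x hx
    obtain ⟨a, ha, rfl⟩ := List.mem_iff_getElem.mp hx
    have hja : j + a < l.length := by
      have := ha; simp [List.length_drop] at this; omega
    rw [List.getElem_drop]
    simp only [decide_eq_true_eq, not_lt]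
    rw [hm]
    exact hs.rel_get_of_le (a := ⟨j, hj⟩) (b := ⟨j + a, hja⟩) (by simp)
  have h3 : (l.take j).countP (fun x => decide (x < m)) ≤ j :=
    le_trans List.countP_le_length (by simp)
  omega

lemma sorted_countP_le (l : List ℝ) (hs : l.Pairwise (· ≤ ·)) (j : ℕ) (hj : j < l.length) :
    j + 1 ≤ l.countP (fun x => decide (x ≤ l.getD j 0)) := by
  set m := l.getD j 0 with hmdef
  have hm : m = l[j] := List.getD_eq_getElem l 0 hj
  have h1 : l.countP (fun x => decide (x ≤ m))
      = (l.take (j+1)).countP (fun x => decide (x ≤ m))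
        + (l.drop (j+1)).countP (fun x => decide (x ≤ m)) := by
    conv_lhs => rw [← List.take_append_drop (j+1) l]
    exact List.countP_append
  have h2 : (l.take (j+1)).countP (fun x => decide (x ≤ m)) = (l.take (j+1)).length := by
    rw [List.countP_eq_length]
    intro x hx
    obtain ⟨a, ha, rfl⟩ := List.mem_iff_getElem.mp hx
    have ha' : a < l.length := lt_of_lt_of_le ha (by simp)
    have haj : a ≤ j := by simp [List.length_take] at ha; omega
    rw [List.getElem_take]
    simp only [decide_eq_true_eq]
    rw [hm]
    exact hs.rel_get_of_le (a := ⟨a, ha'⟩) (b := ⟨j, hj⟩) (by simpa)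
  have h3 : (l.take (j+1)).length = j + 1 := by simp; omega
  omega

variable (v : Fin n → ℝ) (k : ℕ)

lemma count_lt_kthSmall (hk1 : 1 ≤ k) (hk2 : k ≤ n) :
    (Finset.univ.filter fun i => v i < kthSmall v k).card < k := by
  rw [myCard_filter_eq_countP_srt v (fun y => y < kthSmall v k)]
  have hj : k - 1 < (srt v).length := by rw [srt_length]; omega
  have := sorted_countP_lt (srt v) (srt_sorted v) (k-1) hj
  rw [kthSmall_eq]
  omega

lemma le_count_le_kthSmall (hk1 : 1 ≤ k) (hk2 : k ≤ n) :
    k ≤ (Finset.univ.filter fun i => v i ≤ kthSmall v k).card := by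
  rw [myCard_filter_eq_countP_srt v (fun y => y ≤ kthSmall v k)]
  have hj : k - 1 < (srt v).length := by rw [srt_length]; omega
  have := sorted_countP_le (srt v) (srt_sorted v) (k-1) hj
  rw [kthSmall_eq]
  omega

lemma kthSmall_le_of_count (hk1 : 1 ≤ k) (hk2 : k ≤ n) (x : ℝ)
    (h : k ≤ (Finset.univ.filter fun i => v i ≤ x).card) : kthSmall v k ≤ x := by
  by_contra hc
  push_neg at hc
  have hsub : (Finset.univ.filter fun i => v i ≤ x) ⊆
      (Finset.univ.filter fun i => v i < kthSmall v k) := by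
    intro j hj
    simp only [Finset.mem_filter, Finset.mem_univ, true_and] at *
    exact lt_of_le_of_lt hj hc
  have := Finset.card_le_card hsub
  have := count_lt_kthSmall v k hk1 hk2
  omega

lemma kthSmall_lt_of_count (hk1 : 1 ≤ k) (hk2 : k ≤ n) (x : ℝ)
    (h : k ≤ (Finset.univ.filter fun i => v i < x).card) : kthSmall v k < x := by
  by_contra hc
  push_neg at hc
  have hsub : (Finset.univ.filter fun i => v i < x) ⊆
      (Finset.univ.filter fun i => v i < kthSmall v k) := by
    intro j hj
    simp only [Finset.mem_filter, Finset.mem_univ, true_and] at *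
    exact lt_of_lt_of_le hj hc
  have := Finset.card_le_card hsub
  have := count_lt_kthSmall v k hk1 hk2
  omega

lemma count_partition (x : ℝ) :
    (Finset.univ.filter fun i => v i < x).card
      + (Finset.univ.filter fun i => x ≤ v i).card = n := by
  have := Finset.card_filter_add_card_filter_not (s := (Finset.univ : Finset (Fin n)))
    (fun i => v i < x)
  simp only [not_lt, Finset.card_univ, Fintype.card_fin] at this
  exact this

lemma le_kthSmall_of_count (hk1 : 1 ≤ k) (hk2 : k ≤ n) (x : ℝ)
    (h : n + 1 - k ≤ (Finset.univ.filter fun i => x ≤ v i).card) : x ≤ kthSmall v k := by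
  by_contra hc
  push_neg at hc
  have hsub : (Finset.univ.filter fun i => v i ≤ kthSmall v k) ⊆
      (Finset.univ.filter fun i => v i < x) := by
    intro j hj
    simp only [Finset.mem_filter, Finset.mem_univ, true_and] at *
    exact lt_of_le_of_lt hj hc
  have h1 := Finset.card_le_card hsub
  have h2 := le_count_le_kthSmall v k hk1 hk2
  have h3 := count_partition v x
  omega

lemma count_ge_kthSmall (hk1 : 1 ≤ k) (hk2 : k ≤ n) :
    n + 1 - k ≤ (Finset.univ.filter fun i => kthSmall v k ≤ v i).card := by
  have h1 := count_lt_kthSmall v k hk1 hk2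
  have h3 := count_partition v (kthSmall v k)
  omega

/-- Core betweenness for order statistics under a single-coordinate change. -/
lemma kthSmall_btw (hk1 : 1 ≤ k) (hk2 : k ≤ n) (i : Fin n) (b : ℝ) :
    Btw3 (v i) (kthSmall v k) (kthSmall (Function.update v i b) k) := by
  rcases lt_trichotomy (v i) (kthSmall v k) with hlt | heq | hgt
  · left
    refine ⟨le_of_lt hlt, ?_⟩
    apply le_kthSmall_of_count (Function.update v i b) k hk1 hk2
    refine le_trans (count_ge_kthSmall v k hk1 hk2) (Finset.card_le_card ?_)
    intro j hj
    simp only [Finset.mem_filter, Finset.mem_univ, true_and] at *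
    rcases eq_or_ne j i with rfl | hne
    · exact absurd hj (not_le.mpr hlt)
    · rwa [Function.update_of_ne hne]
  · rcases le_total (kthSmall v k) (kthSmall (Function.update v i b) k) with h | h
    · exact Or.inl ⟨le_of_eq heq, h⟩
    · exact Or.inr ⟨h, le_of_eq heq.symm⟩
  · right
    refine ⟨?_, le_of_lt hgt⟩
    apply kthSmall_le_of_count (Function.update v i b) k hk1 hk2
    refine le_trans (le_count_le_kthSmall v k hk1 hk2) (Finset.card_le_card ?_)
    intro j hj
    simp only [Finset.mem_filter, Finset.mem_univ, true_and] at *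
    rcases eq_or_ne j i with rfl | hne
    · exact absurd hj (not_le.mpr hgt)
    · rwa [Function.update_of_ne hne]

lemma kthLarge_eq_kthSmall (hq : 1 ≤ k) (hk : k ≤ n) :
    kthLarge v k = kthSmall v (n + 1 - k) := by
  unfold kthLarge kthSmall
  congr 1
  omega

lemma kthSmall_mono_k (k' : ℕ) (hk1 : 1 ≤ k) (hkk : k ≤ k') (hk2 : k' ≤ n) :
    kthSmall v k ≤ kthSmall v k' := by
  rw [kthSmall_eq, kthSmall_eq]
  have h1 : k - 1 < (srt v).length := by rw [srt_length]; omega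
  have h2 : k' - 1 < (srt v).length := by rw [srt_length]; omega
  rw [List.getD_eq_getElem _ 0 h1, List.getD_eq_getElem _ 0 h2]
  exact (srt_sorted v).rel_get_of_le (a := ⟨k-1, h1⟩) (b := ⟨k'-1, h2⟩) (by simp; omega)

end Aux

/-- endpoint rules satisfy out-between-ness, and hence are strategyproof
with respect to generalized single-peaked preferences. -/
theorem endpoint_rule_outBetween_and_strategyproof (n p q : ℕ) (hp : 1 ≤ p) (hq : 1 ≤ q)
    (hpq : p + q ≤ n + 1) :
    (∀ (S : Fin n → OInt) (i : Fin n) (S' : OInt),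
        Btw3 (S i).lo (eprLo p S) (eprLo p (Function.update S i S')) ∧
        Btw3 (S i).hi (eprHi q S) (eprHi q (Function.update S i S'))) ∧
      Strategyproof (fun S : Fin n → OInt => eprI p q S) := by
  have hp' : p ≤ n := by omega
  have hq' : q ≤ n := by omega
  have hloB : ∀ (S : Fin n → OInt) (i : Fin n) (S' : OInt),
      Btw3 (S i).lo (eprLo p S) (eprLo p (Function.update S i S')) := by
    intro S i S'
    have hupd : (fun j => ((Function.update S i S') j).lo)
        = Function.update (fun j => (S j).lo) i S'.lo := by
      funext j; rcases eq_or_ne j i with rfl | hne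
      · simp
      · simp [Function.update_of_ne hne]
    have h := kthSmall_btw (fun j => (S j).lo) p hp hp' i S'.lo
    unfold eprLo
    rwa [hupd]
  have hhiB : ∀ (S : Fin n → OInt) (i : Fin n) (S' : OInt),
      Btw3 (S i).hi (eprHi q S) (eprHi q (Function.update S i S')) := by
    intro S i S'
    have hupd : (fun j => ((Function.update S i S') j).hi)
        = Function.update (fun j => (S j).hi) i S'.hi := by
      funext j; rcases eq_or_ne j i with rfl | hne
      · simp
      · simp [Function.update_of_ne hne]
    have h := kthSmall_btw (fun j => (S j).hi) (n + 1 - q) (by omega) (by omega) i S'.hi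
    unfold eprHi
    rw [kthLarge_eq_kthSmall _ _ hq hq', kthLarge_eq_kthSmall _ _ hq hq', hupd]
    exact h
  have hpos : ∀ S : Fin n → OInt, eprLo p S < eprHi q S := by
    intro S
    have h1 : eprLo p S ≤ kthSmall (fun j => (S j).lo) (n + 1 - q) :=
      kthSmall_mono_k (fun j => (S j).lo) p (n + 1 - q) hp (by omega) (by omega)
    have h2 : kthSmall (fun j => (S j).lo) (n + 1 - q)
        < kthSmall (fun j => (S j).hi) (n + 1 - q) := by
      apply kthSmall_lt_of_count _ _ (by omega) (by omega)
      refine le_trans (le_count_le_kthSmall (fun j => (S j).hi) (n + 1 - q) (by omega) (by omega))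
        (Finset.card_le_card ?_)
      intro j hj
      simp only [Finset.mem_filter, Finset.mem_univ, true_and] at *
      exact lt_of_lt_of_le (S j).lt hj
    unfold eprHi
    rw [kthLarge_eq_kthSmall _ _ hq hq']
    exact lt_of_le_of_lt h1 h2
  have heprI : ∀ S : Fin n → OInt, eprI p q S = ⟨eprLo p S, eprHi q S, hpos S⟩ :=
    fun S => dif_pos (hpos S)
  refine ⟨fun S i S' => ⟨hloB S i S', hhiB S i S'⟩, ?_⟩
  intro S i pref peak hsp
  have h1 : IB ((Function.update S i peak) i) (eprI p q (Function.update S i peak))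
      (eprI p q (Function.update (Function.update S i peak) i (S i))) := by
    rw [heprI, heprI]
    exact ⟨hloB _ i (S i), hhiB _ i (S i)⟩
  rw [Function.update_idem, Function.update_eq_self, Function.update_self] at h1
  exact (hsp.2 _ _ h1).2
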